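/- Let (a_k)_{k≥1} be a uniformly bounded sequence of nonnegative reals such that (1/n) Σ_{k=1}^n a_k → ā and (1/n) Σ_{k=1}^n a_k² → ā̄² with ā̄² > 0 as n → ∞. Let (ε_k)_{k≥1} be i.i.d. with mean zero and variance σ² ∈ (0, ∞). Define the corrected Hoyer index g_n(x) = h_n(x) − ā σ² / ( √(ā̄² (ā̄² + σ²)) (√(ā̄²) + √(ā̄² + σ²)) ). Then g_n(a_1+ε_1, …, a_n+ε_n) − h_n(a_1, …, a_n) → 0 almost surely as n → ∞; in particular g_n(a+ε) → 1 − ā/√(ā̄²) almost surely. -/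

import Mathlib

open MeasureTheory ProbabilityTheory Filter

/-- The Hoyer sparsity index of the vector `(x 0, …, x (n-1))`:
`h_n(x) = (√n - |Σ_{k<n} x k| / ‖x‖₂) / (√n - 1)`. -/
noncomputable def hoyerSeq (n : ℕ) (x : ℕ → ℝ) : ℝ :=
  (Real.sqrt n -
      |∑ k ∈ Finset.range n, x k| / Real.sqrt (∑ k ∈ Finset.range n, (x k) ^ 2)) /
    (Real.sqrt n - 1)

/-- The asymptotic bias induced on the Hoyer index by additive white noise of variance `s2`. -/
noncomputable def hoyerBias (abar a2bar s2 : ℝ) : ℝ :=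
  abar * s2 /
    (Real.sqrt (a2bar * (a2bar + s2)) * (Real.sqrt a2bar + Real.sqrt (a2bar + s2)))

/-- The corrected Hoyer index `g_n(x) = h_n(x) - bias(ā, ā̄², σ²)`. -/
noncomputable def correctedHoyerSeq (abar a2bar s2 : ℝ) (n : ℕ) (x : ℕ → ℝ) : ℝ :=
  hoyerSeq n x - hoyerBias abar a2bar s2



section Aux

set_option linter.unusedSectionVars false
set_option linter.unusedVariables false

open scoped ENNReal

lemma sqrt_nat_atTop : Tendsto (fun n : ℕ => Real.sqrt n) atTop atTop := by
  apply (tendsto_atTop_atTop_of_monotone (fun a b hab => Real.sqrt_le_sqrt hab)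
    (fun b => ⟨b ^ 2, by rw [Real.sqrt_sq_eq_abs]; exact le_abs_self b⟩)).comp
    tendsto_natCast_atTop_atTop

lemma ratio_tendsto_one : Tendsto (fun n : ℕ => Real.sqrt n / (Real.sqrt n - 1)) atTop (nhds 1) := by
  have h1 : Tendsto (fun t : ℝ => t / (t - 1)) atTop (nhds 1) := by
    have h2 : Tendsto (fun t : ℝ => 1 + 1 / (t - 1)) atTop (nhds 1) := by
      have := tendsto_inv_atTop_zero.comp
        (tendsto_atTop_add_const_right atTop (-1 : ℝ) tendsto_id)
      simpa [one_div, Function.comp, ← sub_eq_add_neg] using (tendsto_const_nhds (x := (1:ℝ)) (f := atTop)).add this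
    apply h2.congr'
    filter_upwards [eventually_gt_atTop (1:ℝ)] with t ht
    have : t - 1 ≠ 0 := by linarith
    field_simp
    ring
  exact h1.comp sqrt_nat_atTop

lemma hoyer_tendsto (x : ℕ → ℝ) (S Q : ℝ) (hQ : 0 < Q)
    (hS : Tendsto (fun n : ℕ => (∑ k ∈ Finset.range n, x k) / n) atTop (nhds S))
    (hQ' : Tendsto (fun n : ℕ => (∑ k ∈ Finset.range n, (x k) ^ 2) / n) atTop (nhds Q)) :
    Tendsto (fun n : ℕ => hoyerSeq n x) atTop (nhds (1 - |S| / Real.sqrt Q)) := by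
  have hu : Tendsto (fun n : ℕ => |∑ k ∈ Finset.range n, x k| / n) atTop (nhds |S|) := by
    have := hS.abs
    apply this.congr
    intro n
    rw [abs_div, Nat.abs_cast]
  have hvsq : Tendsto (fun n : ℕ => Real.sqrt ((∑ k ∈ Finset.range n, (x k) ^ 2) / n))
      atTop (nhds (Real.sqrt Q)) :=
    (Real.continuous_sqrt.tendsto Q).comp hQ'
  have hQs : Real.sqrt Q ≠ 0 := ne_of_gt (Real.sqrt_pos.2 hQ)
  have hmain : Tendsto (fun n : ℕ =>
      (1 - (|∑ k ∈ Finset.range n, x k| / n) /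
        Real.sqrt ((∑ k ∈ Finset.range n, (x k) ^ 2) / n)) *
      (Real.sqrt n / (Real.sqrt n - 1))) atTop (nhds ((1 - |S| / Real.sqrt Q) * 1)) :=
    ((tendsto_const_nhds.sub (hu.div hvsq hQs)).mul ratio_tendsto_one)
  rw [mul_one] at hmain
  apply hmain.congr'
  have hpos : ∀ᶠ n : ℕ in atTop, 0 < (∑ k ∈ Finset.range n, (x k) ^ 2) / n :=
    hQ'.eventually (eventually_gt_nhds hQ)
  filter_upwards [hpos, eventually_ge_atTop 2] with n hp hn2
  have hn0 : (0:ℝ) < n := by exact_mod_cast Nat.lt_of_lt_of_le Nat.zero_lt_two hn2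
  set A := |∑ k ∈ Finset.range n, x k| with hA
  set Qn := ∑ k ∈ Finset.range n, (x k) ^ 2 with hQn
  have hQn0 : 0 < Qn := by
    have := mul_pos hp hn0
    rwa [div_mul_cancel₀] at this
    exact ne_of_gt hn0
  set t := Real.sqrt n with ht
  have ht0 : 0 < t := Real.sqrt_pos.2 hn0
  have ht1 : 1 < t := by
    rw [ht, show (1:ℝ) = Real.sqrt 1 by rw [Real.sqrt_one]]
    apply Real.sqrt_lt_sqrt zero_le_one
    exact_mod_cast Nat.lt_of_lt_of_le Nat.one_lt_two hn2
  have htt : (n : ℝ) = t * t := (Real.mul_self_sqrt hn0.le).symm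
  set q := Real.sqrt Qn with hq
  have hq0 : 0 < q := Real.sqrt_pos.2 hQn0
  have hdiv : Real.sqrt (Qn / n) = q / t := Real.sqrt_div hQn0.le n
  rw [hoyerSeq, ← hA, ← hQn, ← ht, ← hq, hdiv, htt]
  have ht1' : t - 1 ≠ 0 := by linarith
  field_simp

lemma bias_eq (abar a2bar s2 : ℝ) (h1 : 0 < a2bar) (h2 : 0 < s2) :
    hoyerBias abar a2bar s2 = abar / Real.sqrt a2bar - abar / Real.sqrt (a2bar + s2) := by
  have h3 : (0:ℝ) < a2bar + s2 := by linarith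
  rw [hoyerBias]
  set p := Real.sqrt a2bar with hp
  set q := Real.sqrt (a2bar + s2) with hq
  have hp0 : 0 < p := Real.sqrt_pos.2 h1
  have hq0 : 0 < q := Real.sqrt_pos.2 h3
  have hpp : p * p = a2bar := Real.mul_self_sqrt h1.le
  have hqq : q * q = a2bar + s2 := Real.mul_self_sqrt h3.le
  have hs2 : s2 = q * q - p * p := by rw [hpp, hqq]; ring
  have hmul : Real.sqrt (a2bar * (a2bar + s2)) = p * q := Real.sqrt_mul h1.le _
  rw [hmul]
  have hpq : p + q ≠ 0 := by positivity
  rw [div_sub_div _ _ hp0.ne' hq0.ne', div_eq_div_iff (by positivity) (by positivity)]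
  rw [hs2]
  ring

variable {Ω : Type*} [MeasureSpace Ω] [IsProbabilityMeasure (ℙ : Measure Ω)]

lemma var_weighted_sum (ε : ℕ → Ω → ℝ) (σ2 : ℝ)
    (hindep : ∀ i j, i ≠ j → IndepFun (ε i) (ε j) ℙ)
    (hint : ∀ k, Integrable (ε k) ℙ)
    (hmean : ∀ k, ∫ ω, ε k ω = 0)
    (hsqint : ∀ k, Integrable (fun ω => (ε k ω) ^ 2) ℙ)
    (hvar : ∀ k, ∫ ω, (ε k ω) ^ 2 = σ2)
    (c : ℕ → ℝ) (s : Finset ℕ) :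
    ∫ ω, (∑ k ∈ s, c k * ε k ω) ^ 2 = (∑ k ∈ s, (c k) ^ 2) * σ2 := by
  have hprod : ∀ i j : ℕ, Integrable (fun ω => (c i * ε i ω) * (c j * ε j ω)) ℙ := by
    intro i j
    rcases eq_or_ne i j with rfl | hij
    · have := (hsqint i).const_mul (c i * c i)
      apply this.congr
      filter_upwards with ω
      ring
    · have h := (hindep i j hij).integrable_mul (hint i) (hint j)
      have := h.const_mul (c i * c j)
      apply this.congr
      filter_upwards with ω
      simp only [Pi.mul_apply]
      ring
  have expand : ∀ ω : Ω, (∑ k ∈ s, c k * ε k ω) ^ 2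
      = ∑ i ∈ s, ∑ j ∈ s, (c i * ε i ω) * (c j * ε j ω) := by
    intro ω
    rw [sq, Finset.sum_mul_sum]
  calc ∫ ω, (∑ k ∈ s, c k * ε k ω) ^ 2
      = ∫ ω, ∑ i ∈ s, ∑ j ∈ s, (c i * ε i ω) * (c j * ε j ω) := by
        simp_rw [expand]
    _ = ∑ i ∈ s, ∑ j ∈ s, ∫ ω, (c i * ε i ω) * (c j * ε j ω) := by
        rw [integral_finset_sum s (fun i _ => integrable_finset_sum s (fun j _ => hprod i j))]
        exact Finset.sum_congr rfl fun i _ =>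
          integral_finset_sum s (fun j _ => hprod i j)
    _ = ∑ i ∈ s, ∑ j ∈ s, if i = j then (c i) ^ 2 * σ2 else 0 := by
        refine Finset.sum_congr rfl fun i _ => Finset.sum_congr rfl fun j _ => ?_
        rcases eq_or_ne i j with rfl | hij
        · simp only [if_pos rfl]
          have : ∀ ω, (c i * ε i ω) * (c i * ε i ω) = (c i * c i) * (ε i ω) ^ 2 := by
            intro ω; ring
          simp_rw [this]
          rw [integral_const_mul, hvar i, sq]
          simp
        · simp only [if_neg hij]
          have : ∀ ω, (c i * ε i ω) * (c j * ε j ω) = (c i * c j) * (ε i ω * ε j ω) := by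
            intro ω; ring
          simp_rw [this]
          rw [integral_const_mul]
          have h := (hindep i j hij).integral_mul_eq_mul_integral (hint i).1 (hint j).1
          have h2 : ∫ ω, ε i ω * ε j ω = (∫ ω, ε i ω) * ∫ ω, ε j ω := h
          rw [h2, hmean i, hmean j]
          ring
    _ = (∑ k ∈ s, (c k) ^ 2) * σ2 := by
        rw [Finset.sum_mul]
        refine Finset.sum_congr rfl fun i hi => ?_
        rw [Finset.sum_ite_eq s i (fun _ => (c i) ^ 2 * σ2), if_pos hi]

lemma cheb (f : Ω → ℝ) (hf : Integrable (fun ω => f ω ^ 2) ℙ) {δ : ℝ} (hδ : 0 < δ) :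
    ℙ {ω | δ ≤ |f ω|} ≤ ENNReal.ofReal ((∫ ω, f ω ^ 2) / δ ^ 2) := by
  have hsub : {ω | δ ≤ |f ω|} ⊆ {ω | δ ^ 2 ≤ f ω ^ 2} := by
    intro ω h
    simp only [Set.mem_setOf_eq] at h ⊢
    calc δ ^ 2 ≤ |f ω| ^ 2 := by apply pow_le_pow_left₀ hδ.le h
      _ = f ω ^ 2 := sq_abs _
  have markov := mul_meas_ge_le_integral_of_nonneg
    (μ := ℙ) (f := fun ω => f ω ^ 2) (ae_of_all _ fun ω => sq_nonneg _) hf (δ ^ 2)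
  have hδ2 : (0:ℝ) < δ ^ 2 := by positivity
  have hI : 0 ≤ ∫ ω, f ω ^ 2 := integral_nonneg fun ω => sq_nonneg _
  have htr : (ℙ {ω | δ ^ 2 ≤ f ω ^ 2}).toReal ≤ (∫ ω, f ω ^ 2) / δ ^ 2 := by
    rw [le_div_iff₀ hδ2]
    rw [measureReal_def] at markov
    linarith [markov]
  calc ℙ {ω | δ ≤ |f ω|} ≤ ℙ {ω | δ ^ 2 ≤ f ω ^ 2} := measure_mono hsub
    _ ≤ ENNReal.ofReal ((∫ ω, f ω ^ 2) / δ ^ 2) := by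
        rw [ENNReal.le_ofReal_iff_toReal_le (measure_ne_top _ _) (by positivity)]
        exact htr

lemma sq_sum_integrable (ε : ℕ → Ω → ℝ)
    (hindep : ∀ i j, i ≠ j → IndepFun (ε i) (ε j) ℙ)
    (hint : ∀ k, Integrable (ε k) ℙ)
    (hsqint : ∀ k, Integrable (fun ω => (ε k ω) ^ 2) ℙ)
    (c : ℕ → ℝ) (s : Finset ℕ) :
    Integrable (fun ω => (∑ k ∈ s, c k * ε k ω) ^ 2) ℙ := by
  have hprod : ∀ i j : ℕ, Integrable (fun ω => (c i * ε i ω) * (c j * ε j ω)) ℙ := by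
    intro i j
    rcases eq_or_ne i j with rfl | hij
    · have := (hsqint i).const_mul (c i * c i)
      apply this.congr
      filter_upwards with ω
      ring
    · have h := (hindep i j hij).integrable_mul (hint i) (hint j)
      have := h.const_mul (c i * c j)
      apply this.congr
      filter_upwards with ω
      simp only [Pi.mul_apply]
      ring
  have := integrable_finset_sum s
    (fun i (_ : i ∈ s) => integrable_finset_sum s (fun j (_ : j ∈ s) => hprod i j))
  apply this.congr
  filter_upwards with ω
  rw [sq, Finset.sum_mul_sum]

theorem weighted_slln (ε : ℕ → Ω → ℝ) (σ2 : ℝ)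
    (hindep : ∀ i j, i ≠ j → IndepFun (ε i) (ε j) ℙ)
    (hint : ∀ k, Integrable (ε k) ℙ)
    (hmean : ∀ k, ∫ ω, ε k ω = 0)
    (hsqint : ∀ k, Integrable (fun ω => (ε k ω) ^ 2) ℙ)
    (hvar : ∀ k, ∫ ω, (ε k ω) ^ 2 = σ2)
    (c : ℕ → ℝ) (C : ℝ) (hC : ∀ k, |c k| ≤ C) :
    ∀ᵐ ω ∂(ℙ : Measure Ω),
      Tendsto (fun n : ℕ => (∑ k ∈ Finset.range n, c k * ε k ω) / n) atTop (nhds 0) := by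
  have hσ2 : 0 ≤ σ2 := (hvar 0) ▸ integral_nonneg fun ω => sq_nonneg _
  have hC0 : 0 ≤ C := le_trans (abs_nonneg _) (hC 0)
  -- the basic Chebyshev bound for partial sums over `Ico j m`
  have key : ∀ (j m : ℕ) {δ' : ℝ}, 0 < δ' →
      ℙ {ω | δ' ≤ |∑ k ∈ Finset.Ico j m, c k * ε k ω|} ≤
        ENNReal.ofReal (C ^ 2 * σ2 * ((m - j : ℕ) : ℝ) / δ' ^ 2) := by
    intro j m δ' hδ'
    have h1 := cheb (fun ω => ∑ k ∈ Finset.Ico j m, c k * ε k ω)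
      (sq_sum_integrable ε hindep hint hsqint c _) hδ'
    refine h1.trans (ENNReal.ofReal_le_ofReal ?_)
    rw [var_weighted_sum ε σ2 hindep hint hmean hsqint hvar c]
    have hnum : (∑ k ∈ Finset.Ico j m, (c k) ^ 2) * σ2 ≤ C ^ 2 * σ2 * ((m - j : ℕ) : ℝ) := by
      calc (∑ k ∈ Finset.Ico j m, (c k) ^ 2) * σ2
          ≤ ((Finset.Ico j m).card • (C ^ 2)) * σ2 := by
            apply mul_le_mul_of_nonneg_right _ hσ2
            apply Finset.sum_le_card_nsmul
            intro k _
            calc (c k) ^ 2 = |c k| ^ 2 := (sq_abs _).symm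
              _ ≤ C ^ 2 := by gcongr; exact hC k
        _ = C ^ 2 * σ2 * ((m - j : ℕ) : ℝ) := by
            rw [Nat.card_Ico, nsmul_eq_mul]; ring
    gcongr
  -- for each `δ`, a.e. eventually `|T m|/m ≤ 2δ`
  have main : ∀ δ : ℝ, 0 < δ → ∀ᵐ ω ∂(ℙ : Measure Ω),
      ∀ᶠ m : ℕ in atTop, |(∑ k ∈ Finset.range m, c k * ε k ω) / m| ≤ 2 * δ := by
    intro δ hδ
    set K := C ^ 2 * σ2 / δ ^ 2 with hK
    have hK0 : 0 ≤ K := by positivity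
    -- the bad events
    set s : ℕ → Set Ω := fun n =>
      {ω | δ * (n : ℝ) ^ 2 ≤ |∑ k ∈ Finset.Ico 0 (n ^ 2), c k * ε k ω|} ∪
        ⋃ m ∈ Finset.Ico (n ^ 2) ((n + 1) ^ 2),
          {ω | δ * (n : ℝ) ^ 2 ≤ |∑ k ∈ Finset.Ico (n ^ 2) m, c k * ε k ω|} with hs
    have hbound : ∀ n : ℕ, 1 ≤ n → ℙ (s n) ≤ ENNReal.ofReal (10 * K / (n : ℝ) ^ 2) := by
      intro n hn
      have hn0 : (0 : ℝ) < n := by exact_mod_cast hn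
      have hδn : 0 < δ * (n : ℝ) ^ 2 := by positivity
      have h1 : ℙ {ω | δ * (n : ℝ) ^ 2 ≤ |∑ k ∈ Finset.Ico 0 (n ^ 2), c k * ε k ω|} ≤
          ENNReal.ofReal (K / (n : ℝ) ^ 2) := by
        refine (key 0 (n ^ 2) hδn).trans (ENNReal.ofReal_le_ofReal ?_)
        rw [Nat.sub_zero]
        apply le_of_eq
        rw [hK]
        push_cast
        field_simp
      have h2 : ∀ m ∈ Finset.Ico (n ^ 2) ((n + 1) ^ 2),
          ℙ {ω | δ * (n : ℝ) ^ 2 ≤ |∑ k ∈ Finset.Ico (n ^ 2) m, c k * ε k ω|} ≤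
            ENNReal.ofReal (3 * K / (n : ℝ) ^ 3) := by
        intro m hm
        rw [Finset.mem_Ico] at hm
        refine (key (n ^ 2) m hδn).trans (ENNReal.ofReal_le_ofReal ?_)
        have hcard : ((m - n ^ 2 : ℕ) : ℝ) ≤ 2 * n + 1 := by
          have hle : m - n ^ 2 ≤ 2 * n + 1 := by
            have h2 := hm.2
            have he : (n + 1) ^ 2 = n ^ 2 + 2 * n + 1 := by ring
            omega
          calc ((m - n ^ 2 : ℕ) : ℝ) ≤ ((2 * n + 1 : ℕ) : ℝ) := by exact_mod_cast hle
            _ = 2 * n + 1 := by push_cast; ring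
        rw [div_le_div_iff₀ (by positivity) (by positivity)]
        have h3 : (2 * (n:ℝ) + 1) ≤ 3 * n := by
          have h1n : (1:ℝ) ≤ n := by exact_mod_cast hn
          linarith
        calc C ^ 2 * σ2 * ((m - n ^ 2 : ℕ) : ℝ) * (n : ℝ) ^ 3
            ≤ C ^ 2 * σ2 * (3 * n) * (n : ℝ) ^ 3 := by
              gcongr
              exact hcard.trans h3
          _ = 3 * (C ^ 2 * σ2) * (n : ℝ) ^ 4 := by ring
          _ = 3 * K * (δ * (n : ℝ) ^ 2) ^ 2 := by
              rw [hK]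
              field_simp
      calc ℙ (s n) ≤
          ℙ {ω | δ * (n : ℝ) ^ 2 ≤ |∑ k ∈ Finset.Ico 0 (n ^ 2), c k * ε k ω|} +
          ∑ m ∈ Finset.Ico (n ^ 2) ((n + 1) ^ 2),
            ℙ {ω | δ * (n : ℝ) ^ 2 ≤ |∑ k ∈ Finset.Ico (n ^ 2) m, c k * ε k ω|} := by
            refine (measure_union_le _ _).trans ?_
            gcongr
            exact measure_biUnion_finset_le _ _
        _ ≤ ENNReal.ofReal (K / (n : ℝ) ^ 2) +
            ∑ m ∈ Finset.Ico (n ^ 2) ((n + 1) ^ 2), ENNReal.ofReal (3 * K / (n : ℝ) ^ 3) := by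
            exact add_le_add h1 (Finset.sum_le_sum h2)
        _ = ENNReal.ofReal (K / (n : ℝ) ^ 2) +
            ENNReal.ofReal (((2 * n + 1 : ℕ) : ℝ) * (3 * K / (n : ℝ) ^ 3)) := by
            rw [Finset.sum_const]
            have hcd : (Finset.Ico (n ^ 2) ((n + 1) ^ 2)).card = 2 * n + 1 := by
              rw [Nat.card_Ico]
              have he : (n + 1) ^ 2 = n ^ 2 + 2 * n + 1 := by ring
              omega
            rw [hcd, nsmul_eq_mul, ← ENNReal.ofReal_natCast (2 * n + 1),
              ← ENNReal.ofReal_mul (by positivity)]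
        _ ≤ ENNReal.ofReal (10 * K / (n : ℝ) ^ 2) := by
            rw [← ENNReal.ofReal_add (by positivity) (by positivity)]
            apply ENNReal.ofReal_le_ofReal
            push_cast
            have h3 : (2 * (n:ℝ) + 1) ≤ 3 * n := by
              have : (1:ℝ) ≤ n := by exact_mod_cast hn
              linarith
            calc K / (n : ℝ) ^ 2 + (2 * (n:ℝ) + 1) * (3 * K / (n : ℝ) ^ 3)
                ≤ K / (n : ℝ) ^ 2 + (3 * (n:ℝ)) * (3 * K / (n : ℝ) ^ 3) := by gcongr
              _ = K / (n : ℝ) ^ 2 + 9 * K / (n : ℝ) ^ 2 := by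
                  field_simp
                  ring
              _ = 10 * K / (n : ℝ) ^ 2 := by ring
    -- summability and Borel-Cantelli
    have hsummable : Summable (fun n : ℕ => 10 * K / ((n + 1 : ℕ) : ℝ) ^ 2) := by
      have h0 : Summable (fun n : ℕ => 1 / ((n : ℝ)) ^ 2) := by
        simpa using Real.summable_one_div_nat_pow.2 one_lt_two
      have h1 : Summable (fun n : ℕ => 1 / (((n : ℕ) + 1 : ℕ) : ℝ) ^ 2) :=
        (summable_nat_add_iff (f := fun n : ℕ => 1 / ((n : ℝ)) ^ 2) 1).2 h0
      have := h1.mul_left (10 * K)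
      apply this.congr
      intro n
      rw [mul_one_div]
    have htsum : (∑' n : ℕ, ℙ (s (n + 1))) ≠ ⊤ := by
      apply ne_top_of_le_ne_top (b := ∑' n : ℕ, ENNReal.ofReal (10 * K / ((n + 1 : ℕ) : ℝ) ^ 2))
      · rw [← ENNReal.ofReal_tsum_of_nonneg (fun n => by positivity) hsummable]
        exact ENNReal.ofReal_ne_top
      · exact ENNReal.tsum_le_tsum fun n => by
          simpa using hbound (n + 1) (Nat.le_add_left 1 n)
    filter_upwards [ae_eventually_notMem htsum] with ω hω
    rw [eventually_atTop] at hω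
    obtain ⟨N, hN⟩ := hω
    rw [eventually_atTop]
    refine ⟨(N + 2) ^ 2, fun m hm => ?_⟩
    set n := Nat.sqrt m with hn
    have h1 : n ^ 2 ≤ m := Nat.sqrt_le' m
    have h2 : m < (n + 1) ^ 2 := Nat.lt_succ_sqrt' m
    have hnN : N + 1 ≤ n := by nlinarith [hm, h2]
    have hns : ω ∉ s n := by
      have := hN (n - 1) (by omega)
      have hn1 : n - 1 + 1 = n := by omega
      rwa [hn1] at this
    rw [hs, Set.mem_union, Set.mem_iUnion₂, not_or] at hns
    push_neg at hns
    obtain ⟨hA, hB⟩ := hns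
    rw [Set.mem_setOf_eq] at hA
    push_neg at hA
    have hBm : ¬ (δ * (n : ℝ) ^ 2 ≤ |∑ k ∈ Finset.Ico (n ^ 2) m, c k * ε k ω|) := by
      have := hB m (Finset.mem_Ico.2 ⟨h1, h2⟩)
      rwa [Set.mem_setOf_eq] at this
    push_neg at hBm
    have hsplit : ∑ k ∈ Finset.range m, c k * ε k ω =
        (∑ k ∈ Finset.Ico 0 (n ^ 2), c k * ε k ω) + ∑ k ∈ Finset.Ico (n ^ 2) m, c k * ε k ω := by
      rw [Finset.range_eq_Ico]
      exact (Finset.sum_Ico_consecutive _ (Nat.zero_le _) h1).symm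
    have hm0 : (0 : ℝ) < m := by
      have : 1 ≤ m := le_trans (by nlinarith) hm
      exact_mod_cast this
    rw [abs_div, abs_of_pos hm0, div_le_iff₀ hm0]
    have hn2m : ((n : ℝ)) ^ 2 ≤ (m : ℝ) := by exact_mod_cast h1
    calc |∑ k ∈ Finset.range m, c k * ε k ω|
        ≤ |∑ k ∈ Finset.Ico 0 (n ^ 2), c k * ε k ω| +
          |∑ k ∈ Finset.Ico (n ^ 2) m, c k * ε k ω| := by rw [hsplit]; exact abs_add_le _ _
      _ ≤ δ * (n : ℝ) ^ 2 + δ * (n : ℝ) ^ 2 := by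
          exact add_le_add hA.le hBm.le
      _ = 2 * δ * (n : ℝ) ^ 2 := by ring
      _ ≤ 2 * δ * m := by gcongr
  -- countable intersection over δ = 1/(j+1)
  have hall : ∀ᵐ ω ∂(ℙ : Measure Ω), ∀ j : ℕ,
      ∀ᶠ m : ℕ in atTop,
        |(∑ k ∈ Finset.range m, c k * ε k ω) / m| ≤ 2 * (1 / ((j : ℝ) + 1)) := by
    rw [ae_all_iff]
    intro j
    exact main (1 / ((j : ℝ) + 1)) (by positivity)
  filter_upwards [hall] with ω hω
  rw [NormedAddCommGroup.tendsto_nhds_zero]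
  intro e he
  obtain ⟨j, hj⟩ := exists_nat_gt (2 / e)
  have hj2 : 2 * (1 / ((j : ℝ) + 1)) < e := by
    have hj0 : (0:ℝ) < (j : ℝ) + 1 := by positivity
    rw [mul_one_div, div_lt_iff₀ hj0]
    have h2e : (2:ℝ) < (j:ℝ) * e := (div_lt_iff₀ he).1 hj
    nlinarith
  filter_upwards [hω j] with m hmle
  calc ‖(∑ k ∈ Finset.range m, c k * ε k ω) / m‖ = |(∑ k ∈ Finset.range m, c k * ε k ω) / m| := rfl
    _ ≤ 2 * (1 / ((j : ℝ) + 1)) := hmle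
    _ < e := hj2

end Aux

/-- Corollary 2 (consistency of the corrected Hoyer index): for a uniformly bounded
nonnegative anomaly sequence with Cesàro averages `ā` and `ā̄² > 0`, and i.i.d. mean-zero
noise of variance `σ² ∈ (0,∞)`, almost surely
`g_n(a+ε) - h_n(a) → 0` and `g_n(a+ε) → 1 - ā/√(ā̄²)`. -/
theorem correctedHoyer_consistent
    {Ω : Type*} [MeasureSpace Ω] [IsProbabilityMeasure (ℙ : Measure Ω)]
    (a : ℕ → ℝ) (abar a2bar : ℝ)
    (ha_nonneg : ∀ k, 0 ≤ a k)
    (ha_bdd : ∃ C, ∀ k, a k ≤ C)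
    (hcesaro : Tendsto (fun n : ℕ => (∑ k ∈ Finset.range n, a k) / n) atTop (nhds abar))
    (hcesaro2 :
      Tendsto (fun n : ℕ => (∑ k ∈ Finset.range n, (a k) ^ 2) / n) atTop (nhds a2bar))
    (ha2bar : 0 < a2bar)
    (ε : ℕ → Ω → ℝ) (σ2 : ℝ) (hσ2 : 0 < σ2)
    (hmeas : ∀ k, Measurable (ε k))
    (hindep : iIndepFun ε ℙ)
    (hident : ∀ k, Measure.map (ε k) ℙ = Measure.map (ε 0) ℙ)
    (hint : ∀ k, Integrable (ε k) ℙ)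
    (hmean : ∀ k, ∫ ω, ε k ω = 0)
    (hsqint : ∀ k, Integrable (fun ω => (ε k ω) ^ 2) ℙ)
    (hvar : ∀ k, ∫ ω, (ε k ω) ^ 2 = σ2) :
    ∀ᵐ ω ∂(ℙ : Measure Ω),
      Tendsto
        (fun n : ℕ =>
          correctedHoyerSeq abar a2bar σ2 n (fun k => a k + ε k ω) - hoyerSeq n a)
        atTop (nhds 0) ∧
      Tendsto
        (fun n : ℕ => correctedHoyerSeq abar a2bar σ2 n (fun k => a k + ε k ω))
        atTop (nhds (1 - abar / Real.sqrt a2bar)) := by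
  classical
  obtain ⟨C, hCb⟩ := ha_bdd
  have hpind : ∀ i j : ℕ, i ≠ j → IndepFun (ε i) (ε j) ℙ := fun i j hij => hindep.indepFun hij
  have hm2 : Measurable fun x : ℝ => x ^ 2 := measurable_id.pow_const 2
  have hidd : ∀ i, IdentDistrib (ε i) (ε 0) ℙ ℙ :=
    fun i => ⟨(hmeas i).aemeasurable, (hmeas 0).aemeasurable, hident i⟩
  -- strong law for the noise
  have E1 : ∀ᵐ ω ∂(ℙ : Measure Ω),
      Tendsto (fun n : ℕ => (∑ k ∈ Finset.range n, ε k ω) / n) atTop (nhds 0) := by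
    have := strong_law_ae_real ε (hint 0) (fun i j hij => hpind i j hij) hidd
    rwa [hmean 0] at this
  -- strong law for the squared noise
  have E2 : ∀ᵐ ω ∂(ℙ : Measure Ω),
      Tendsto (fun n : ℕ => (∑ k ∈ Finset.range n, (ε k ω) ^ 2) / n) atTop (nhds σ2) := by
    have := strong_law_ae_real (fun k ω => (ε k ω) ^ 2) (hsqint 0)
      (fun i j hij => (hpind i j hij).comp hm2 hm2)
      (fun i => (hidd i).comp hm2)
    rwa [hvar 0] at this
  -- weighted strong law for the cross term
  have E3 : ∀ᵐ ω ∂(ℙ : Measure Ω),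
      Tendsto (fun n : ℕ => (∑ k ∈ Finset.range n, a k * ε k ω) / n) atTop (nhds 0) :=
    weighted_slln ε σ2 hpind hint hmean hsqint hvar a C
      (fun k => by rw [abs_of_nonneg (ha_nonneg k)]; exact hCb k)
  have habar : 0 ≤ abar := by
    refine ge_of_tendsto hcesaro ?_
    filter_upwards with n
    exact div_nonneg (Finset.sum_nonneg fun k _ => ha_nonneg k) (Nat.cast_nonneg n)
  have hQpos : (0:ℝ) < a2bar + σ2 := by linarith
  filter_upwards [E1, E2, E3] with ω h1 h2 h3
  -- Cesàro limits for the noisy sequence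
  have hS : Tendsto (fun n : ℕ => (∑ k ∈ Finset.range n, (a k + ε k ω)) / n)
      atTop (nhds abar) := by
    have hbase := hcesaro.add h1
    rw [add_zero] at hbase
    apply hbase.congr
    intro n
    rw [Finset.sum_add_distrib, add_div]
  have hQ : Tendsto (fun n : ℕ => (∑ k ∈ Finset.range n, (a k + ε k ω) ^ 2) / n)
      atTop (nhds (a2bar + σ2)) := by
    have hbase := (hcesaro2.add (h3.const_mul 2)).add h2
    rw [mul_zero, add_zero] at hbase
    apply hbase.congr
    intro n
    have hsq : ∀ k : ℕ, (a k + ε k ω) ^ 2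
        = (a k) ^ 2 + 2 * (a k * ε k ω) + (ε k ω) ^ 2 := fun k => by ring
    simp_rw [hsq, Finset.sum_add_distrib]
    rw [← Finset.mul_sum, add_div, add_div, mul_div_assoc]
  -- limits of the two Hoyer indices
  have H1 : Tendsto (fun n : ℕ => hoyerSeq n (fun k => a k + ε k ω)) atTop
      (nhds (1 - abar / Real.sqrt (a2bar + σ2))) := by
    have := hoyer_tendsto (fun k => a k + ε k ω) abar (a2bar + σ2) hQpos hS hQ
    rwa [abs_of_nonneg habar] at this
  have H2 : Tendsto (fun n : ℕ => hoyerSeq n a) atTop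
      (nhds (1 - abar / Real.sqrt a2bar)) := by
    have := hoyer_tendsto a abar a2bar ha2bar hcesaro hcesaro2
    rwa [abs_of_nonneg habar] at this
  have hval : (1 - abar / Real.sqrt (a2bar + σ2)) - hoyerBias abar a2bar σ2
      = 1 - abar / Real.sqrt a2bar := by
    rw [bias_eq abar a2bar σ2 ha2bar hσ2]
    ring
  have G : Tendsto (fun n : ℕ => correctedHoyerSeq abar a2bar σ2 n (fun k => a k + ε k ω))
      atTop (nhds (1 - abar / Real.sqrt a2bar)) := by
    have := H1.sub_const (hoyerBias abar a2bar σ2)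
    rw [hval] at this
    exact this.congr fun n => rfl
  refine ⟨?_, G⟩
  have := G.sub H2
  rwa [sub_self] at this
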